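/- Let τ be a triangle in ℝ³ shared by two tetrahedra λ = L*τ and ρ = R*τ with L, R strictly on opposite sides of the plane of τ, forming a non-degenerate Delaunay pair (R strictly outside the circumsphere of λ). Let c_τ be the circumcenter of τ, c_λ and c_ρ the circumcenters of λ and ρ, and u the unit normal to the plane of τ pointing toward R. Then the signed dual length of τ, ⟨c_ρ − c_λ, u⟩, is strictly positive. -/

import Mathlib

open scoped RealInnerProductSpace

private lemma equidist_inner {n : ℕ} (c a b : EuclideanSpace ℝ (Fin n))
    (h : dist c a = dist c b) : 2 * ⟪c, b - a⟫ = ‖b‖^2 - ‖a‖^2 := by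
  have h2 : ‖c - a‖^2 = ‖c - b‖^2 := by
    rw [← dist_eq_norm, ← dist_eq_norm, h]
  rw [norm_sub_sq_real, norm_sub_sq_real] at h2
  rw [inner_sub_right]
  nlinarith [h2]

/-- Codimension-1 positivity in 3D: let `τ` be the triangle `PQS` shared by two tetrahedra
`L * τ` and `R * τ` with `L`, `R` strictly on opposite sides of the plane of `τ`, forming a
non-degenerate Delaunay pair (`R` strictly outside the circumsphere of `L * τ`).  With `u`
the unit normal to the plane of `τ` pointing toward `R`, and `cL`, `cR` the circumcenters
of the two tetrahedra, the signed dual length `⟪cR - cL, u⟫` of `τ` is strictly positive. -/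
theorem signed_dual_length_pos_3d
    (P Q S L R cL cR u : EuclideanSpace ℝ (Fin 3))
    (hnd : AffineIndependent ℝ ![P, Q, S])
    (hu : ‖u‖ = 1) (huPQ : ⟪u, Q - P⟫ = 0) (huPS : ⟪u, S - P⟫ = 0)
    (hLside : ⟪L - P, u⟫ < 0) (hRside : 0 < ⟪R - P, u⟫)
    (hcL1 : dist cL P = dist cL Q) (hcL2 : dist cL P = dist cL S)
    (hcL3 : dist cL P = dist cL L)
    (hcR1 : dist cR P = dist cR Q) (hcR2 : dist cR P = dist cR S)
    (hcR3 : dist cR P = dist cR R)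
    (hDel : dist R cL > dist P cL) :
    0 < ⟪cR - cL, u⟫ := by
  set v := cR - cL with hv
  -- v orthogonal to Q - P and S - P
  have hQ : ⟪v, Q - P⟫ = 0 := by
    have h1 := equidist_inner cL P Q hcL1
    have h2 := equidist_inner cR P Q hcR1
    have : ⟪v, Q - P⟫ = ⟪cR, Q - P⟫ - ⟪cL, Q - P⟫ := by rw [hv, inner_sub_left]
    rw [this]; linarith
  have hS : ⟪v, S - P⟫ = 0 := by
    have h1 := equidist_inner cL P S hcL2
    have h2 := equidist_inner cR P S hcR2
    have : ⟪v, S - P⟫ = ⟪cR, S - P⟫ - ⟪cL, S - P⟫ := by rw [hv, inner_sub_left]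
    rw [this]; linarith
  -- Delaunay: ⟪R - P, v⟫ > 0
  have hRP : 0 < ⟪R - P, v⟫ := by
    have hA : ‖P - cL‖^2 < ‖R - cL‖^2 := by
      have := hDel
      rw [dist_eq_norm, dist_eq_norm] at this
      have h1 : (0:ℝ) ≤ ‖P - cL‖ := norm_nonneg _
      nlinarith
    have hB : ‖P - cR‖^2 = ‖R - cR‖^2 := by
      have := hcR3
      rw [dist_eq_norm, dist_eq_norm] at this
      rw [show P - cR = -(cR - P) from (neg_sub cR P).symm,
        show R - cR = -(cR - R) from (neg_sub cR R).symm, norm_neg, norm_neg, this]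
    rw [norm_sub_sq_real, norm_sub_sq_real] at hA hB
    have hexp : ⟪R - P, v⟫ = ⟪R, cR⟫ - ⟪R, cL⟫ - ⟪P, cR⟫ + ⟪P, cL⟫ := by
      rw [hv, inner_sub_left, inner_sub_right, inner_sub_right]; ring
    rw [hexp]; linarith
  -- u spans the orthogonal complement of span {Q-P, S-P}
  have hu0 : u ≠ 0 := by intro h; rw [h, norm_zero] at hu; norm_num at hu
  set W : Submodule ℝ (EuclideanSpace ℝ (Fin 3)) :=
    Submodule.span ℝ (Set.range ![Q - P, S - P]) with hW
  have hmem : ∀ x : EuclideanSpace ℝ (Fin 3), ⟪x, Q - P⟫ = 0 → ⟪x, S - P⟫ = 0 → x ∈ Wᗮ := by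
    intro x h1 h2
    rw [Submodule.mem_orthogonal]
    intro y hy
    induction hy using Submodule.span_induction with
    | mem z hz =>
        obtain ⟨i, rfl⟩ := hz
        fin_cases i
        · simp only [Matrix.cons_val_zero]
          rw [real_inner_comm]; exact h1
        · simp only [Matrix.cons_val_one, Matrix.head_cons]
          rw [real_inner_comm]; exact h2
    | zero => simp
    | add a b _ _ ha hb => rw [inner_add_left, ha, hb]; ring
    | smul c a _ ha => rw [inner_smul_left, ha]; ring
  have huW : u ∈ Wᗮ := hmem u huPQ huPS
  have hvW : v ∈ Wᗮ := hmem v hQ hS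
  -- linear independence of Q-P, S-P
  have hli : LinearIndependent ℝ ![Q - P, S - P] := by
    have h := (affineIndependent_iff_linearIndependent_vsub ℝ ![P, Q, S] 0).mp hnd
    have h2 := h.comp (![⟨1, by decide⟩, ⟨2, by decide⟩] : Fin 2 → {x : Fin 3 // x ≠ (0 : Fin 3)})
      (by intro a b hab; fin_cases a <;> fin_cases b <;> simp_all)
    convert h2 using 1
    funext i
    fin_cases i <;> simp
    rfl
  have hdim : Module.finrank ℝ Wᗮ = 1 := by
    have h1 : Module.finrank ℝ W = 2 := by
      rw [hW, finrank_span_eq_card hli]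
      simp
    have h2 := Submodule.finrank_add_finrank_orthogonal (K := W)
    have h3 : Module.finrank ℝ (EuclideanSpace ℝ (Fin 3)) = 3 := by simp
    omega
  have hspan : (Submodule.span ℝ {u} : Submodule ℝ (EuclideanSpace ℝ (Fin 3))) = Wᗮ := by
    apply Submodule.eq_of_le_of_finrank_eq
    · rw [Submodule.span_le, Set.singleton_subset_iff]; exact huW
    · rw [hdim, finrank_span_singleton hu0]
  have hvspan : v ∈ Submodule.span ℝ ({u} : Set (EuclideanSpace ℝ (Fin 3))) := by
    rw [hspan]; exact hvW
  obtain ⟨c, hc⟩ := Submodule.mem_span_singleton.mp hvspan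
  have hvu : ⟪v, u⟫ = c := by
    rw [← hc, real_inner_smul_left]
    have : ⟪u, u⟫ = 1 := by
      rw [real_inner_self_eq_norm_sq, hu]; norm_num
    rw [this]; ring
  have hcpos : 0 < c := by
    have : ⟪R - P, v⟫ = c * ⟪R - P, u⟫ := by
      rw [← hc, real_inner_smul_right]
    rw [this] at hRP
    nlinarith
  rw [show ⟪cR - cL, u⟫ = ⟪v, u⟫ from rfl, hvu]
  exact hcpos
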